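/- Let N ∈ ℝ³ be a unit vector, and let f_i, f_j, f_k ∈ ℝ³ satisfy ⟨f_j − f_i, N⟩ = 0 and ⟨f_k − f_i, N⟩ = 0. Assume the signed area A := ⟨(f_j − f_i) × (f_k − f_i), N⟩ / 2 is nonzero, and let u_i, u_j, u_k ∈ ℝ. Define Z := −(u_i (f_k − f_j) + u_j (f_i − f_k) + u_k (f_j − f_i)) / (2A). Then (f_j − f_i) × Z = (u_j − u_i) N, (f_k − f_j) × Z = (u_k − u_j) N, and (f_i − f_k) × Z = (u_i − u_k) N. -/

import Mathlib

open scoped RealInnerProductSpace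

/-- The cross product on Euclidean three-space. -/
noncomputable def cross (x y : EuclideanSpace ℝ (Fin 3)) : EuclideanSpace ℝ (Fin 3) :=
  (WithLp.equiv 2 (Fin 3 → ℝ)).symm
    ![x 1 * y 2 - x 2 * y 1, x 2 * y 0 - x 0 * y 2, x 0 * y 1 - x 1 * y 0]

lemma inner3 (x y : EuclideanSpace ℝ (Fin 3)) :
    ⟪x, y⟫ = x 0 * y 0 + x 1 * y 1 + x 2 * y 2 := by
  simp [PiLp.inner_apply, Fin.sum_univ_three, mul_comm]

lemma key (a b n : EuclideanSpace ℝ (Fin 3)) (hn : ‖n‖ = 1)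
    (ha : ⟪a, n⟫ = 0) (hb : ⟪b, n⟫ = 0) :
    cross a b = ⟪cross a b, n⟫ • n := by
  have hn2 : n 0 * n 0 + n 1 * n 1 + n 2 * n 2 = 1 := by
    have h := real_inner_self_eq_norm_sq n
    rw [inner3, hn] at h; linarith [h]
  rw [inner3] at ha hb
  have hc0 : cross a b 0 = a 1 * b 2 - a 2 * b 1 := rfl
  have hc1 : cross a b 1 = a 2 * b 0 - a 0 * b 2 := rfl
  have hc2 : cross a b 2 = a 0 * b 1 - a 1 * b 0 := rfl
  have e0 : cross a b 0 = (⟪cross a b, n⟫ • n) 0 := by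
    rw [PiLp.smul_apply, smul_eq_mul, inner3, hc0, hc1, hc2]
    linear_combination (a 2 * b 1 - a 1 * b 2) * hn2 + (n 1 * b 2 - n 2 * b 1) * ha - (n 1 * a 2 - n 2 * a 1) * hb
  have e1 : cross a b 1 = (⟪cross a b, n⟫ • n) 1 := by
    rw [PiLp.smul_apply, smul_eq_mul, inner3, hc0, hc1, hc2]
    linear_combination (a 0 * b 2 - a 2 * b 0) * hn2 + (n 2 * b 0 - n 0 * b 2) * ha - (n 2 * a 0 - n 0 * a 2) * hb
  have e2 : cross a b 2 = (⟪cross a b, n⟫ • n) 2 := by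
    rw [PiLp.smul_apply, smul_eq_mul, inner3, hc0, hc1, hc2]
    linear_combination (a 1 * b 0 - a 0 * b 1) * hn2 + (n 0 * b 1 - n 1 * b 0) * ha - (n 0 * a 1 - n 1 * a 0) * hb
  ext i
  fin_cases i
  · exact e0
  · exact e1
  · exact e2

/-- For a non-degenerate planar triangle `(f_i, f_j, f_k)` with unit
normal `N` and signed area `A`, the angular velocity vector
`Z = −(u_i (f_k − f_j) + u_j (f_i − f_k) + u_k (f_j − f_i))/(2A)` realizes the
infinitesimal normal deformation `u N` on the edges:
`df(e) × Z = (du(e)) N` on all three edges. -/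
theorem stmt_12 (N fi fj fk : EuclideanSpace ℝ (Fin 3)) (hN : ‖N‖ = 1)
    (hj : ⟪fj - fi, N⟫ = 0) (hk : ⟪fk - fi, N⟫ = 0)
    (A : ℝ) (hA : A = ⟪cross (fj - fi) (fk - fi), N⟫ / 2) (hA0 : A ≠ 0)
    (ui uj uk : ℝ) (Z : EuclideanSpace ℝ (Fin 3))
    (hZ : Z = -(1 / (2 * A)) • (ui • (fk - fj) + uj • (fi - fk) + uk • (fj - fi))) :
    cross (fj - fi) Z = (uj - ui) • N ∧
    cross (fk - fj) Z = (uk - uj) • N ∧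
    cross (fi - fk) Z = (ui - uk) • N := by
  have hC : cross (fj - fi) (fk - fi) = (2 * A) • N := by
    rw [key (fj - fi) (fk - fi) N hN hj hk]
    congr 1
    rw [hA]; ring
  have hC0 : (fj - fi) 1 * (fk - fi) 2 - (fj - fi) 2 * (fk - fi) 1 = 2 * A * N 0 := by
    have := congrFun (congrArg (WithLp.equiv 2 (Fin 3 → ℝ)) hC) 0
    simpa [cross] using this
  have hC1 : (fj - fi) 2 * (fk - fi) 0 - (fj - fi) 0 * (fk - fi) 2 = 2 * A * N 1 := by
    have := congrFun (congrArg (WithLp.equiv 2 (Fin 3 → ℝ)) hC) 1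
    simpa [cross] using this
  have hC2 : (fj - fi) 0 * (fk - fi) 1 - (fj - fi) 1 * (fk - fi) 0 = 2 * A * N 2 := by
    have := congrFun (congrArg (WithLp.equiv 2 (Fin 3 → ℝ)) hC) 2
    simpa [cross] using this
  simp only [PiLp.sub_apply] at hC0 hC1 hC2
  have hZv : ∀ m : Fin 3, Z m = -(1 / (2 * A)) *
      (ui * (fk m - fj m) + uj * (fi m - fk m) + uk * (fj m - fi m)) := by
    intro m
    rw [hZ]
    simp [PiLp.smul_apply, PiLp.add_apply, PiLp.sub_apply]
    ring
  refine ⟨?_, ?_, ?_⟩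
  · ext m
    fin_cases m
    · show (fj - fi) 1 * Z 2 - (fj - fi) 2 * Z 1 = (uj - ui) * N 0
      rw [hZv 2, hZv 1]
      simp only [PiLp.sub_apply]
      field_simp
      linear_combination (uj - ui) * hC0
    · show (fj - fi) 2 * Z 0 - (fj - fi) 0 * Z 2 = (uj - ui) * N 1
      rw [hZv 0, hZv 2]
      simp only [PiLp.sub_apply]
      field_simp
      linear_combination (uj - ui) * hC1
    · show (fj - fi) 0 * Z 1 - (fj - fi) 1 * Z 0 = (uj - ui) * N 2
      rw [hZv 1, hZv 0]
      simp only [PiLp.sub_apply]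
      field_simp
      linear_combination (uj - ui) * hC2
  · ext m
    fin_cases m
    · show (fk - fj) 1 * Z 2 - (fk - fj) 2 * Z 1 = (uk - uj) * N 0
      rw [hZv 2, hZv 1]
      simp only [PiLp.sub_apply]
      field_simp
      linear_combination (uk - uj) * hC0
    · show (fk - fj) 2 * Z 0 - (fk - fj) 0 * Z 2 = (uk - uj) * N 1
      rw [hZv 0, hZv 2]
      simp only [PiLp.sub_apply]
      field_simp
      linear_combination (uk - uj) * hC1
    · show (fk - fj) 0 * Z 1 - (fk - fj) 1 * Z 0 = (uk - uj) * N 2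
      rw [hZv 1, hZv 0]
      simp only [PiLp.sub_apply]
      field_simp
      linear_combination (uk - uj) * hC2
  · ext m
    fin_cases m
    · show (fi - fk) 1 * Z 2 - (fi - fk) 2 * Z 1 = (ui - uk) * N 0
      rw [hZv 2, hZv 1]
      simp only [PiLp.sub_apply]
      field_simp
      linear_combination (ui - uk) * hC0
    · show (fi - fk) 2 * Z 0 - (fi - fk) 0 * Z 2 = (ui - uk) * N 1
      rw [hZv 0, hZv 2]
      simp only [PiLp.sub_apply]
      field_simp
      linear_combination (ui - uk) * hC1
    · show (fi - fk) 0 * Z 1 - (fi - fk) 1 * Z 0 = (ui - uk) * N 2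
      rw [hZv 1, hZv 0]
      simp only [PiLp.sub_apply]
      field_simp
      linear_combination (ui - uk) * hC2
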